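/- Let w_1,…,w_n ≥ 0 be nonnegative weights, let K = max_{i≤n}‖x_i‖_∞, let c̄ > 0, and let κ_u > 0 satisfy κ_u·‖δ_T‖ ≤ ‖x_i'δ‖_{2,n} for every δ ∈ Δ_c̄. Then for every ε ∈ (0,1] and every δ ∈ Δ_c̄: ‖√w_i·x_i'δ‖²_{2,n} ≥ ε·‖x_i'δ‖²_{2,n}·(1 − (|{i ≤ n : w_i ≤ ε}|/n)·s·(1+c̄)²·K²/κ_u²). -/

import Mathlib

open Finset

/-- Inner product `x_i'δ` of the `i`-th design vector with `δ`. -/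
def xdot {n p : ℕ} (x : Fin n → Fin p → ℝ) (δ : Fin p → ℝ) (i : Fin n) : ℝ :=
  ∑ j, x i j * δ j

/-- Truncation-based comparison between weighted and unweighted restricted eigenvalue
quantities (Lemma B.4, third pair of relations): for nonnegative weights `w_i`,
`K = max_i ‖x_i‖_∞`, an unweighted restricted eigenvalue `κ_u` over the cone `Δ_c̄`,
every `ε ∈ (0,1]` and every `δ ∈ Δ_c̄`:
`(1/n)∑ᵢ w_i (x_i'δ)² ≥ ε·((1/n)∑ᵢ (x_i'δ)²)·(1 − (#{i : w_i ≤ ε}/n)·s(1+c̄)²K²/κ_u²)`. -/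
theorem weighted_unweighted_truncation_comparison {n p : ℕ} (hn : 0 < n) (hp : 0 < p)
    (x : Fin n → Fin p → ℝ)
    (w : Fin n → ℝ) (hw : ∀ i, 0 ≤ w i)
    (K : ℝ) (hK : K = ⨆ i : Fin n, ⨆ j : Fin p, |x i j|)
    (T : Finset (Fin p)) (hT : 1 ≤ T.card)
    (cbar : ℝ) (hcbar : 0 < cbar)
    (κu : ℝ) (hκu : 0 < κu)
    (hRE : ∀ δ : Fin p → ℝ, (∑ j ∈ Tᶜ, |δ j|) ≤ cbar * ∑ j ∈ T, |δ j| →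
      κu * Real.sqrt (∑ j ∈ T, δ j ^ 2)
        ≤ Real.sqrt ((1 / (n : ℝ)) * ∑ i, xdot x δ i ^ 2)) :
    ∀ ε : ℝ, ε ∈ Set.Ioc (0 : ℝ) 1 →
      ∀ δ : Fin p → ℝ, (∑ j ∈ Tᶜ, |δ j|) ≤ cbar * ∑ j ∈ T, |δ j| →
        ε * ((1 / (n : ℝ)) * ∑ i, xdot x δ i ^ 2)
            * (1 - (((Finset.univ.filter (fun i : Fin n => w i ≤ ε)).card : ℝ) / (n : ℝ))
                * (T.card : ℝ) * (1 + cbar) ^ 2 * K ^ 2 / κu ^ 2)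
          ≤ (1 / (n : ℝ)) * ∑ i, w i * xdot x δ i ^ 2 := by
  intro ε hε δ hδ
  obtain ⟨hε0, hε1⟩ := hε
  have hn' : (0 : ℝ) < n := by exact_mod_cast hn
  have hKbd : ∀ i j, |x i j| ≤ K := by
    intro i j
    rw [hK]
    have h1 : |x i j| ≤ ⨆ j, |x i j| :=
      le_ciSup (Set.Finite.bddAbove (Set.finite_range fun j => |x i j|)) j
    have h2 : (⨆ j, |x i j|) ≤ ⨆ i, ⨆ j, |x i j| :=
      le_ciSup (Set.Finite.bddAbove (Set.finite_range fun i => ⨆ j, |x i j|)) i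
    exact le_trans h1 h2
  have hK0 : 0 ≤ K := le_trans (abs_nonneg _) (hKbd ⟨0, hn⟩ ⟨0, hp⟩)
  set A : ℝ := ∑ i, xdot x δ i ^ 2 with hAdef
  have hA0 : 0 ≤ A := Finset.sum_nonneg fun i _ => sq_nonneg _
  set Q : ℝ := (1 / (n : ℝ)) * A with hQdef
  have hQ0 : 0 ≤ Q := mul_nonneg (by positivity) hA0
  have hRE' := hRE δ hδ
  have hS0 : 0 ≤ ∑ j ∈ T, δ j ^ 2 := Finset.sum_nonneg fun j _ => sq_nonneg _
  -- squared RE bound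
  have hST : κu ^ 2 * ∑ j ∈ T, δ j ^ 2 ≤ Q := by
    have h1 := mul_self_le_mul_self
      (mul_nonneg hκu.le (Real.sqrt_nonneg _)) hRE'
    rw [Real.mul_self_sqrt hQ0] at h1
    nlinarith [Real.mul_self_sqrt hS0]
  have hST' : ∑ j ∈ T, δ j ^ 2 ≤ Q / κu ^ 2 := by
    rw [le_div_iff₀ (by positivity)]
    nlinarith
  -- Cauchy–Schwarz on T
  have hCS : (∑ j ∈ T, |δ j|) ^ 2 ≤ (T.card : ℝ) * ∑ j ∈ T, δ j ^ 2 := by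
    have := sq_sum_le_card_mul_sum_sq (s := T) (f := fun j => |δ j|)
    simpa [sq_abs] using this
  -- ℓ1 bound on |x_i'δ|
  set L : ℝ := ∑ j ∈ T, |δ j| with hLdef
  have hL0 : 0 ≤ L := Finset.sum_nonneg fun j _ => abs_nonneg _
  have hsum1 : ∀ i, |xdot x δ i| ≤ K * ((1 + cbar) * L) := by
    intro i
    calc |xdot x δ i| = |∑ j, x i j * δ j| := rfl
      _ ≤ ∑ j, |x i j * δ j| := Finset.abs_sum_le_sum_abs _ _
      _ = ∑ j, |x i j| * |δ j| := by simp [abs_mul]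
      _ ≤ ∑ j, K * |δ j| :=
          Finset.sum_le_sum fun j _ =>
            mul_le_mul_of_nonneg_right (hKbd i j) (abs_nonneg _)
      _ = K * ∑ j, |δ j| := by rw [← Finset.mul_sum]
      _ = K * (∑ j ∈ T, |δ j| + ∑ j ∈ Tᶜ, |δ j|) := by
          rw [Finset.sum_add_sum_compl]
      _ ≤ K * ((1 + cbar) * L) := by
          apply mul_le_mul_of_nonneg_left _ hK0
          have : ∑ j ∈ Tᶜ, |δ j| ≤ cbar * L := hδ
          nlinarith
  set B : ℝ := K ^ 2 * (1 + cbar) ^ 2 * ((T.card : ℝ) * (Q / κu ^ 2)) with hBdef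
  have hbd : ∀ i, xdot x δ i ^ 2 ≤ B := by
    intro i
    have h1 : xdot x δ i ^ 2 ≤ (K * ((1 + cbar) * L)) ^ 2 := by
      rw [← sq_abs]
      exact pow_le_pow_left₀ (abs_nonneg _) (hsum1 i) 2
    have h2 : (K * ((1 + cbar) * L)) ^ 2 = K ^ 2 * (1 + cbar) ^ 2 * L ^ 2 := by ring
    have h3 : L ^ 2 ≤ (T.card : ℝ) * (Q / κu ^ 2) :=
      le_trans hCS (mul_le_mul_of_nonneg_left hST' (by positivity))
    have h4 : K ^ 2 * (1 + cbar) ^ 2 * L ^ 2 ≤ B := by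
      rw [hBdef]
      exact mul_le_mul_of_nonneg_left h3 (by positivity)
    linarith
  set S : Finset (Fin n) := Finset.univ.filter (fun i : Fin n => w i ≤ ε) with hSdef
  set m : ℝ := (S.card : ℝ) with hmdef
  have hA2 : ∑ i ∈ S, xdot x δ i ^ 2 ≤ m * B := by
    have := Finset.sum_le_card_nsmul S (fun i => xdot x δ i ^ 2) B
      (fun i _ => hbd i)
    simpa [nsmul_eq_mul] using this
  have hsplit :
      ∑ i ∈ S, xdot x δ i ^ 2
        + ∑ i ∈ Finset.univ.filter (fun i : Fin n => ¬ w i ≤ ε), xdot x δ i ^ 2 = A :=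
    Finset.sum_filter_add_sum_filter_not _ _ _
  have hlow : ε * ∑ i ∈ Finset.univ.filter (fun i : Fin n => ¬ w i ≤ ε), xdot x δ i ^ 2
      ≤ ∑ i ∈ Finset.univ.filter (fun i : Fin n => ¬ w i ≤ ε), w i * xdot x δ i ^ 2 := by
    rw [Finset.mul_sum]
    apply Finset.sum_le_sum
    intro i hi
    simp only [Finset.mem_filter] at hi
    exact mul_le_mul_of_nonneg_right (le_of_lt (lt_of_not_ge hi.2)) (sq_nonneg _)
  have hfull : ∑ i ∈ Finset.univ.filter (fun i : Fin n => ¬ w i ≤ ε), w i * xdot x δ i ^ 2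
      ≤ ∑ i, w i * xdot x δ i ^ 2 :=
    Finset.sum_le_sum_of_subset_of_nonneg (Finset.filter_subset _ _)
      (fun i _ _ => mul_nonneg (hw i) (sq_nonneg _))
  have key : ε * Q * (1 - (m / (n : ℝ)) * (T.card : ℝ) * (1 + cbar) ^ 2 * K ^ 2 / κu ^ 2)
      = (1 / (n : ℝ)) * (ε * (A - m * B)) := by
    rw [hBdef, hQdef]; ring
  calc ε * Q * (1 - (m / (n : ℝ)) * (T.card : ℝ) * (1 + cbar) ^ 2 * K ^ 2 / κu ^ 2)
      = (1 / (n : ℝ)) * (ε * (A - m * B)) := key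
    _ ≤ (1 / (n : ℝ)) * (ε * (A - ∑ i ∈ S, xdot x δ i ^ 2)) := by
        apply mul_le_mul_of_nonneg_left _ (by positivity)
        exact mul_le_mul_of_nonneg_left (by linarith) hε0.le
    _ = (1 / (n : ℝ)) *
        (ε * ∑ i ∈ Finset.univ.filter (fun i : Fin n => ¬ w i ≤ ε), xdot x δ i ^ 2) := by
        rw [show A - ∑ i ∈ S, xdot x δ i ^ 2
          = ∑ i ∈ Finset.univ.filter (fun i : Fin n => ¬ w i ≤ ε), xdot x δ i ^ 2 from by
            linarith]
    _ ≤ (1 / (n : ℝ)) *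
        ∑ i ∈ Finset.univ.filter (fun i : Fin n => ¬ w i ≤ ε), w i * xdot x δ i ^ 2 :=
        mul_le_mul_of_nonneg_left hlow (by positivity)
    _ ≤ (1 / (n : ℝ)) * ∑ i, w i * xdot x δ i ^ 2 :=
        mul_le_mul_of_nonneg_left hfull (by positivity)
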